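/- Let σ ≥ 1 and ω = arccos(1/σ). Then the Cayley transform C(λ) = (1-λ)/(1+λ) maps the closure of the Stolz domain S_σ into the closed sector Σ̄_ω = {w : w = 0 or |arg w| ≤ ω}. -/

import Mathlib

open Real

theorem stmt4 (σ : ℝ) (hσ : 1 ≤ σ) (z : ℂ)
    (hz : z ∈ closure ({w : ℂ | ‖w‖ < 1 ∧
        ‖(1 - w)‖ / (1 - ‖w‖) < σ} ∪ {1})) :
    (1 - z) / (1 + z) = 0 ∨ |((1 - z) / (1 + z)).arg| ≤ Real.arccos (1 / σ) := by
  have hσ0 : (0:ℝ) < σ := lt_of_lt_of_le one_pos hσ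
  have key : ‖(1 - z)‖ * ‖(1 + z)‖ ≤ σ * (1 - ‖z‖ ^ 2) := by
    have hcl : IsClosed {w : ℂ |
        ‖(1 - w)‖ * ‖(1 + w)‖ ≤ σ * (1 - ‖w‖ ^ 2)} :=
      isClosed_le
        (((continuous_norm.comp (continuous_const.sub continuous_id)).mul
          (continuous_norm.comp (continuous_const.add continuous_id))))
        (continuous_const.mul (continuous_const.sub
          ((continuous_norm.comp continuous_id).pow 2)))
    have hsub : ({w : ℂ | ‖w‖ < 1 ∧
        ‖(1 - w)‖ / (1 - ‖w‖) < σ} ∪ {1}) ⊆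
        {w : ℂ | ‖(1 - w)‖ * ‖(1 + w)‖ ≤ σ * (1 - ‖w‖ ^ 2)} := by
      rintro w (⟨h1, h2⟩ | rfl)
      · have h3 : (0:ℝ) < 1 - ‖w‖ := by linarith
        have h4 : ‖(1 - w)‖ < σ * (1 - ‖w‖) := by
          rwa [div_lt_iff₀ h3] at h2
        have h5 : ‖(1 + w)‖ ≤ 1 + ‖w‖ := by
          calc ‖(1 + w)‖ ≤ ‖(1:ℂ)‖ + ‖w‖ := norm_add_le _ _
          _ = 1 + ‖w‖ := by simp
        have h6 : 0 ≤ ‖(1 - w)‖ := norm_nonneg _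
        have h7 : 0 ≤ ‖(1 + w)‖ := norm_nonneg _
        simp only [Set.mem_setOf_eq]
        nlinarith [norm_nonneg w]
      · simp
    exact closure_minimal hsub hcl hz
  by_cases hz1 : 1 + z = 0
  · left; rw [hz1, div_zero]
  by_cases hz2 : 1 - z = 0
  · left; rw [hz2, zero_div]
  right
  set w := (1 - z) / (1 + z) with hw
  have hwne : w ≠ 0 := div_ne_zero hz2 hz1
  have hb : (0:ℝ) < ‖(1 + z)‖ := by
    simpa [norm_pos_iff] using hz1
  have ha : (0:ℝ) < ‖(1 - z)‖ := by
    simpa [norm_pos_iff] using hz2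
  have habs : ‖w‖ = ‖(1 - z)‖ / ‖(1 + z)‖ := norm_div _ _
  have hnsq : Complex.normSq (1 + z) = ‖(1 + z)‖ ^ 2 := (Complex.sq_norm _).symm
  have hre : w.re * ‖(1 + z)‖ ^ 2 = 1 - ‖z‖ ^ 2 := by
    have : w.re = ((1-z).re * (1+z).re + (1-z).im * (1+z).im) / Complex.normSq (1 + z) := by
      rw [hw, Complex.div_re]; ring
    have h2 : ‖(1 + z)‖ ^ 2 ≠ 0 := by positivity
    have hnum : (1-z).re * (1+z).re + (1-z).im * (1+z).im = 1 - ‖z‖ ^ 2 := by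
      rw [← Complex.normSq_eq_norm_sq, Complex.normSq_apply]
      simp [Complex.sub_re, Complex.add_re, Complex.sub_im, Complex.add_im]
      ring
    rw [this, hnsq, div_mul_cancel₀ _ h2, hnum]
  have hwabs : (0:ℝ) < ‖w‖ := norm_pos_iff.mpr hwne
  have hcos : 1 / σ ≤ Real.cos w.arg := by
    rw [Complex.cos_arg hwne, habs, div_div_eq_mul_div, div_le_div_iff₀ hσ0 ha]
    nlinarith [key, hre, hb]
  have harg : |w.arg| ≤ π := abs_le.mpr ⟨(Complex.neg_pi_lt_arg w).le, Complex.arg_le_pi w⟩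
  have hmono : Real.arccos (Real.cos w.arg) ≤ Real.arccos (1 / σ) := by
    rw [Real.arccos_eq_pi_div_two_sub_arcsin, Real.arccos_eq_pi_div_two_sub_arcsin]
    have := Real.monotone_arcsin hcos
    linarith
  calc |w.arg| = Real.arccos (Real.cos |w.arg|) :=
        (Real.arccos_cos (abs_nonneg _) harg).symm
    _ = Real.arccos (Real.cos w.arg) := by rw [Real.cos_abs]
    _ ≤ Real.arccos (1 / σ) := hmono
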